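/- arXiv:1202.6556 — 2 statements merged into one kernel-verified Lean document; each statement's English description precedes it below -/
import Mathlib

section
/- Let G be a graph, C a longest cycle, and P = x→y a longest path in G∖C of length p̄. If ξ and ξ' are two vertices of N_C(x) ∪ N_C(y) that are consecutive on C and at least one of ξ, ξ' lies in N_C(x) ∩ N_C(y), then the arc of C from ξ to ξ' has length at least p̄ + 2. -/
open SimpleGraph

namespace ToughPaper

variable {V : Type*}

/-- Number of connected components of the subgraph induced on the complement of `S`. -/
noncomputable def numComp (G : SimpleGraph V) (S : Set V) : ℕ :=
  Nat.card (G.induce Sᶜ).ConnectedComponent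

/-- The toughness of `G` is greater than 1: `|S| > s(G∖S)` for every cutset `S`. -/
def ToughGtOne [Fintype V] (G : SimpleGraph V) : Prop :=
  ∀ S : Finset V, 1 < numComp G ↑S → numComp G ↑S < S.card

/-- The toughness of `G` is at most 1: some cutset `S` has `|S| ≤ s(G∖S)`. -/
def ToughLeOne [Fintype V] (G : SimpleGraph V) : Prop :=
  ∃ S : Finset V, 1 < numComp G ↑S ∧ S.card ≤ numComp G ↑S

/-- `G` is `k`-connected: more than `k` vertices and no cutset of size `< k`. -/
def KConnected [Fintype V] (k : ℕ) (G : SimpleGraph V) : Prop :=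
  k < Fintype.card V ∧ ∀ S : Finset V, S.card < k → (G.induce (↑S : Set V)ᶜ).Connected

/-- The (vertex) connectivity `κ(G)`. -/
noncomputable def conn [Fintype V] (G : SimpleGraph V) : ℕ :=
  sSup {k | KConnected k G}

/-- `C` is a longest cycle in `G`. -/
def IsLongestCycle (G : SimpleGraph V) {v : V} (C : G.Walk v v) : Prop :=
  C.IsCycle ∧ ∀ (u : V) (D : G.Walk u u), D.IsCycle → D.length ≤ C.length

/-- `P` is a longest path among paths of `G` avoiding the vertex list `W`
(i.e. a longest path of `G ∖ W`). -/
def IsLongestPathOff (G : SimpleGraph V) (W : List V) {x y : V} (P : G.Walk x y) : Prop :=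
  P.IsPath ∧ (∀ u ∈ P.support, u ∉ W) ∧
  ∀ (a b : V) (Q : G.Walk a b), Q.IsPath → (∀ u ∈ Q.support, u ∉ W) → Q.length ≤ P.length

/-- The neighbors of `x` lying on the vertex list `W` (e.g. `N_C(x)` for `W = C.support`). -/
def nbrsOn (G : SimpleGraph V) (W : List V) (x : V) : Set V :=
  {u | u ∈ W ∧ G.Adj x u}

/-- The number of edges of the oriented arc of the closed walk `C` from `a` to `b`. -/
noncomputable def arcLen [DecidableEq V] {G : SimpleGraph V} {v : V}
    (C : G.Walk v v) (a b : V) : ℕ :=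
  if h : ∃ (ha : a ∈ C.support), b ∈ (C.rotate a ha).support then
    ((C.rotate a h.choose).takeUntil b h.choose_spec).length
  else 0

/-- The vertices of the oriented arc of `C` from `a` to `b`. -/
noncomputable def arcSupport [DecidableEq V] {G : SimpleGraph V} {v : V}
    (C : G.Walk v v) (a b : V) : List V :=
  if h : ∃ (ha : a ∈ C.support), b ∈ (C.rotate a ha).support then
    ((C.rotate a h.choose).takeUntil b h.choose_spec).support
  else []

/-- The successor of `a` on the oriented closed walk `C`. -/
noncomputable def cycSucc [DecidableEq V] {G : SimpleGraph V} {v : V}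
    (C : G.Walk v v) (a : V) : V :=
  if h : a ∈ C.support then (C.rotate a h).getVert 1 else a

/-- The predecessor of `a` on the oriented closed walk `C`. -/
noncomputable def cycPred [DecidableEq V] {G : SimpleGraph V} {v : V}
    (C : G.Walk v v) (a : V) : V :=
  if h : a ∈ C.support then (C.rotate a h).getVert ((C.rotate a h).length - 1) else a

/-- `a` and `b` are consecutive elements of `N` on `C`; the arc `a→b` is then an
elementary segment created by `N`. -/
def ConsecOnC [DecidableEq V] {G : SimpleGraph V} {v : V}
    (C : G.Walk v v) (N : Set V) (a b : V) : Prop :=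
  a ∈ N ∧ b ∈ N ∧ a ≠ b ∧ ∀ w ∈ arcSupport C a b, w ≠ a → w ≠ b → w ∉ N

/-- `u` is an interior vertex of the arc `a→b` of `C`. -/
def InteriorArc [DecidableEq V] {G : SimpleGraph V} {v : V}
    (C : G.Walk v v) (a b : V) (u : V) : Prop :=
  u ∈ arcSupport C a b ∧ u ≠ a ∧ u ≠ b

/-- `L` is an intermediate path between the elementary segments `a₁→b₁` and `a₂→b₂`
(created by `N` on `C`), relative to the path with vertex list `Psupp`. -/
def IsInterPath [DecidableEq V] (G : SimpleGraph V) {v z w : V} (C : G.Walk v v)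
    (Psupp : List V) (N : Set V) (a₁ b₁ a₂ b₂ : V) (L : G.Walk z w) : Prop :=
  ConsecOnC C N a₁ b₁ ∧ ConsecOnC C N a₂ b₂ ∧ a₁ ≠ a₂ ∧
  L.IsPath ∧ 0 < L.length ∧ InteriorArc C a₁ b₁ z ∧ InteriorArc C a₂ b₂ w ∧
  ∀ u ∈ L.support, (u ∈ C.support ∨ u ∈ Psupp) → u = z ∨ u = w

/-- Vertex type of the Petersen graph: 2-element subsets of a 5-element set. -/
def PetersenV := {s : Finset (Fin 5) // s.card = 2}

instance : Fintype PetersenV := inferInstanceAs (Fintype {s : Finset (Fin 5) // s.card = 2})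
instance : DecidableEq PetersenV := inferInstanceAs (DecidableEq {s : Finset (Fin 5) // s.card = 2})

/-- The Petersen graph as the Kneser graph `K(5,2)`. -/
def petersen : SimpleGraph PetersenV where
  Adj a b := Disjoint a.1 b.1 ∧ a ≠ b
  symm := ⟨fun a b h => ⟨h.1.symm, h.2.symm⟩⟩
  loopless := ⟨fun a h => h.2 rfl⟩

instance : DecidableRel petersen.Adj :=
  fun a b => inferInstanceAs (Decidable (Disjoint a.1 b.1 ∧ a ≠ b))


lemma mem_tail_of_closed {G : SimpleGraph V} {v u : V} {p : G.Walk v v} (hp : ¬ p.Nil)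
    (hu : u ∈ p.support) : u ∈ p.support.tail := by
  rcases (Walk.not_nil_iff).1 hp with ⟨w, h, q, rfl⟩
  rcases (Walk.mem_support_iff _).1 hu with rfl | h'
  · simpa using Or.inr q.end_mem_support
  · exact h'

lemma mem_support_rotate {G : SimpleGraph V} [DecidableEq V] {v a u : V} {c : G.Walk v v}
    (hc : c.IsCycle) (h : a ∈ c.support) :
    u ∈ (c.rotate a h).support ↔ u ∈ c.support := by
  have h1 : ¬ c.Nil := fun hn => hc.ne_nil hn.eq_nil
  have h2 : ¬ (c.rotate a h).Nil := fun hn => (hc.rotate h).ne_nil hn.eq_nil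
  constructor
  · intro hu
    exact (Walk.mem_support_iff _).2 (Or.inr (((Walk.support_rotate c a h).mem_iff).1
      (mem_tail_of_closed h2 hu)))
  · intro hu
    exact (Walk.mem_support_iff _).2 (Or.inr (((Walk.support_rotate c a h).mem_iff).2
      (mem_tail_of_closed h1 hu)))

lemma length_rotate' {G : SimpleGraph V} [DecidableEq V] {v a : V} (c : G.Walk v v)
    (h : a ∈ c.support) : (c.rotate a h).length = c.length := by
  exact Walk.length_rotate c a h

lemma dropUntil_support_nodup {G : SimpleGraph V} [DecidableEq V] {a b : V}
    {ρ : G.Walk a a} (hρ : ρ.IsCycle) (hb : b ∈ ρ.support) (hba : b ≠ a) :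
    (ρ.dropUntil b hb).support.Nodup := by
  have hsp : ρ.support = (ρ.takeUntil b hb).support ++ (ρ.dropUntil b hb).support.tail := by
    conv_lhs => rw [← Walk.take_spec ρ hb]
    rw [Walk.support_append]
  have htake : (ρ.takeUntil b hb).support = a :: (ρ.takeUntil b hb).support.tail :=
    Walk.support_eq_cons _
  have htail : ρ.support.tail =
      (ρ.takeUntil b hb).support.tail ++ (ρ.dropUntil b hb).support.tail := by
    rw [hsp, htake]; rfl
  have hnd := hρ.support_nodup
  rw [htail, List.nodup_append] at hnd
  have hbT : b ∈ (ρ.takeUntil b hb).support.tail := by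
    have := (ρ.takeUntil b hb).end_mem_support
    rw [htake] at this
    exact (List.mem_cons.1 this).resolve_left hba
  have hbD : b ∉ (ρ.dropUntil b hb).support.tail := fun hh => hnd.2.2 b hbT b hh rfl
  rw [Walk.support_eq_cons (ρ.dropUntil b hb)]
  exact List.nodup_cons.2 ⟨hbD, hnd.2.1⟩

/-- key replacement cycle argument -/
lemma aux_cycle (G : SimpleGraph V) {v x y a b : V} (C : G.Walk v v) (P : G.Walk x y)
    (hC : IsLongestCycle G C) (hPp : P.IsPath) (hPC : ∀ u ∈ P.support, u ∉ C.support)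
    (D : G.Walk b a) (hD : D.support.Nodup) (hsub : ∀ u ∈ D.support, u ∈ C.support)
    (hab : b ≠ a) (h1 : G.Adj x a) (h2 : G.Adj y b) :
    D.length + P.length + 2 ≤ C.length := by
  have hxC : x ∉ C.support := hPC x P.start_mem_support
  have hyC : y ∉ C.support := hPC y P.end_mem_support
  have haC : a ∈ C.support := hsub a D.end_mem_support
  have hbC : b ∈ C.support := hsub b D.start_mem_support
  let R : G.Walk b x := Walk.cons h2.symm P.reverse
  let Q : G.Walk a x := D.reverse.append R
  have hQsup : Q.support = D.support.reverse ++ P.support.reverse := by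
    simp [Q, R, Walk.support_append, Walk.support_reverse]
  have hQp : Q.IsPath := by
    apply Walk.IsPath.mk'
    rw [hQsup, List.nodup_append]
    refine ⟨by simpa using hD, by simpa using hPp.support_nodup, ?_⟩
    intro u hu w hu' huw
    subst huw
    exact hPC u (by simpa using hu') (hsub u (by simpa using hu))
  have hedge : s(x, a) ∉ Q.edges := by
    intro he
    have : s(x, a) ∈ D.reverse.edges ∨ s(x, a) ∈ R.edges := by
      simpa [Q, Walk.edges_append] using he
    rcases this with h | h
    · exact hxC (hsub x (by simpa [Walk.support_reverse] using
        Walk.fst_mem_support_of_mem_edges _ h))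
    · rcases (by simpa [R, Walk.edges_cons] using h :
        s(x, a) = s(b, y) ∨ s(x, a) ∈ P.reverse.edges) with h | h
      · rw [Sym2.eq_iff] at h
        rcases h with ⟨rfl, rfl⟩ | ⟨rfl, rfl⟩
        · exact hxC hbC
        · exact hab rfl
      · have : a ∈ P.support := by
          simpa [Walk.support_reverse] using Walk.snd_mem_support_of_mem_edges _ h
        exact hPC a this haC
  have hW : (Walk.cons h1 Q).IsCycle := (Walk.cons_isCycle_iff Q h1).2 ⟨hQp, hedge⟩
  have hle := hC.2 x _ hW
  simp only [Walk.length_cons, Q, R, Walk.length_append, Walk.length_reverse] at hle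
  omega

/-- If `ξ, ξ'` are consecutive vertices of `N_C(x) ∪ N_C(y)` on the longest cycle `C`
(where `P = x→y` is a longest path in `G ∖ C` of length `p̄`) and at least one of them
lies in `N_C(x) ∩ N_C(y)`, then the arc of `C` from `ξ` to `ξ'` has length at least
`p̄ + 2`. -/
theorem segment_at_common_neighbor {V : Type*} [Fintype V] [DecidableEq V]
    (G : SimpleGraph V) {v x y ξ ξ' : V}
    (C : G.Walk v v) (P : G.Walk x y)
    (hC : IsLongestCycle G C) (hP : IsLongestPathOff G C.support P)
    (hcons : ConsecOnC C (nbrsOn G C.support x ∪ nbrsOn G C.support y) ξ ξ')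
    (hcommon : ξ ∈ nbrsOn G C.support x ∩ nbrsOn G C.support y ∨
      ξ' ∈ nbrsOn G C.support x ∩ nbrsOn G C.support y) :
    P.length + 2 ≤ arcLen C ξ ξ' := by
  obtain ⟨hξN, hξ'N, hne, -⟩ := hcons
  have hξC : ξ ∈ C.support := by rcases hξN with h | h <;> exact h.1
  have hξ'C : ξ' ∈ C.support := by rcases hξ'N with h | h <;> exact h.1
  have hρcyc : (C.rotate ξ hξC).IsCycle := hC.1.rotate hξC
  have hξ'ρ : ξ' ∈ (C.rotate ξ hξC).support := (mem_support_rotate hC.1 hξC).2 hξ'C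
  have hex : ∃ (ha : ξ ∈ C.support), ξ' ∈ (C.rotate ξ ha).support := ⟨hξC, hξ'ρ⟩
  have harc : arcLen C ξ ξ' = ((C.rotate ξ hξC).takeUntil ξ' hξ'ρ).length := by
    unfold arcLen
    rw [dif_pos hex]
  set D := (C.rotate ξ hξC).dropUntil ξ' hξ'ρ with hDdef
  have hlen : ((C.rotate ξ hξC).takeUntil ξ' hξ'ρ).length + D.length = C.length := by
    rw [← length_rotate' C hξC]
    conv_rhs => rw [← Walk.take_spec (C.rotate ξ hξC) hξ'ρ]
    rw [Walk.length_append]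
  have hDnodup : D.support.Nodup := dropUntil_support_nodup hρcyc hξ'ρ hne.symm
  have hDsub : ∀ u ∈ D.support, u ∈ C.support := fun u hu =>
    (mem_support_rotate hC.1 hξC).1 (Walk.support_dropUntil_subset _ hξ'ρ hu)
  have key : (G.Adj x ξ ∧ G.Adj y ξ') ∨ (G.Adj y ξ ∧ G.Adj x ξ') := by
    rcases hcommon with ⟨⟨-, hx⟩, ⟨-, hy⟩⟩ | ⟨⟨-, hx'⟩, ⟨-, hy'⟩⟩
    · rcases hξ'N with ⟨-, h⟩ | ⟨-, h⟩
      · exact Or.inr ⟨hy, h⟩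
      · exact Or.inl ⟨hx, h⟩
    · rcases hξN with ⟨-, h⟩ | ⟨-, h⟩
      · exact Or.inl ⟨h, hy'⟩
      · exact Or.inr ⟨h, hx'⟩
  rcases key with ⟨h1, h2⟩ | ⟨h1, h2⟩
  · have hfin := aux_cycle G C P hC hP.1 hP.2.1 D hDnodup hDsub hne.symm h1 h2
    omega
  · have hPC' : ∀ u ∈ P.reverse.support, u ∉ C.support := by
      intro u hu
      exact hP.2.1 u (by simpa [Walk.support_reverse] using hu)
    have hfin := aux_cycle G C P.reverse hC hP.1.reverse hPC' D hDnodup hDsub hne.symm h1 h2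
    rw [Walk.length_reverse] at hfin
    omega


end ToughPaper
end

section
/- Let G be a graph with minimum degree δ, connectivity κ, toughness τ > 1, and longest cycle C, and let P be a longest path in G∖C of length p̄ with 2 ≤ p̄ ≤ δ − 3, endpoints x₁, x₂ and N_C(x₁) = N_C(x₂) with exactly s = δ − p̄ common neighbors on C. Then x₁x₂ ∈ E(G) (so G[V(P)] is hamiltonian), and every vertex y ∈ V(P) satisfies N_C(y) = N_C(x₁). -/
open SimpleGraph

namespace ToughPaper

variable {V : Type*}

section Aux

variable {G : SimpleGraph V}

lemma support_eq_map_getVert {u v : V} (p : G.Walk u v) :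
    p.support = (List.range (p.length + 1)).map p.getVert := by
  induction p with
  | nil => rfl
  | cons h q ih =>
    rw [Walk.support_cons, ih, Walk.length_cons]
    conv_rhs => rw [List.range_succ_eq_map, List.map_cons, List.map_map]
    congr 1

lemma cycle_getVert_inj {u : V} {p : G.Walk u u} (hp : p.IsCycle) {i j : ℕ}
    (hi : i < p.length) (hj : j < p.length) (h : p.getVert i = p.getVert j) : i = j := by
  have hnd := ((Walk.isCycle_def p).mp hp).2.2
  have hmap : p.support.tail = (List.range p.length).map (fun k => p.getVert (k + 1)) := by
    rw [support_eq_map_getVert, List.range_succ_eq_map]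
    simp [List.map_map, Function.comp_def]
  rw [hmap] at hnd
  have key : ∀ a b, a < p.length → b < p.length → p.getVert (a + 1) = p.getVert (b + 1) →
      a = b := fun a b ha hb hab =>
    List.inj_on_of_nodup_map hnd (List.mem_range.mpr ha) (List.mem_range.mpr hb) hab
  have hlen := hp.three_le_length
  have conv : ∀ i, i < p.length → ∃ i', 1 ≤ i' ∧ i' ≤ p.length ∧
      p.getVert i' = p.getVert i ∧ (i = i' ∨ (i = 0 ∧ i' = p.length)) := by
    intro i hi
    rcases Nat.eq_zero_or_pos i with h0 | h0
    · refine ⟨p.length, by omega, le_rfl, ?_, by omega⟩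
      rw [Walk.getVert_length, h0, Walk.getVert_zero]
    · exact ⟨i, h0, hi.le, rfl, Or.inl rfl⟩
  obtain ⟨i', hi1, hi2, hi3, hi4⟩ := conv i hi
  obtain ⟨j', hj1, hj2, hj3, hj4⟩ := conv j hj
  have heq : i' - 1 = j' - 1 := by
    apply key _ _ (by omega) (by omega)
    rw [Nat.sub_add_cancel hi1, Nat.sub_add_cancel hj1, hi3, hj3, h]
  omega

lemma mod_cancel {n a i j : ℕ} (h : (a + i) % n = (a + j) % n)
    (hi : i < n) (hj : j < n) : i = j := by
  have h2 : i ≡ j [MOD n] := Nat.ModEq.add_left_cancel' a h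
  have h3 : i % n = j % n := h2
  rwa [Nat.mod_eq_of_lt hi, Nat.mod_eq_of_lt hj] at h3

/-- A walk along consecutive vertices of the coordinatized cycle. -/
def arcW (G : SimpleGraph V) (g : ℕ → V)
    (hadj : ∀ m, G.Adj (g m) (g (m + 1))) : (d m : ℕ) → G.Walk (g m) (g (m + d))
  | 0, m => Walk.nil
  | (d + 1), m =>
    (Walk.cons (hadj m) (arcW G g hadj d (m + 1))).copy rfl (congrArg g (by omega))

lemma arcW_length (g : ℕ → V) (hadj : ∀ m, G.Adj (g m) (g (m + 1))) (d m : ℕ) :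
    (arcW G g hadj d m).length = d := by
  induction d generalizing m with
  | zero => rfl
  | succ d ih => simp [arcW, Walk.length_copy, ih]

lemma arcW_support (g : ℕ → V) (hadj : ∀ m, G.Adj (g m) (g (m + 1))) (d m : ℕ) :
    (arcW G g hadj d m).support = (List.range (d + 1)).map (fun j => g (m + j)) := by
  induction d generalizing m with
  | zero => rfl
  | succ d ih =>
    rw [arcW, Walk.support_copy, Walk.support_cons, ih]
    conv_rhs => rw [List.range_succ_eq_map, List.map_cons, List.map_map]
    congr 1
    apply List.map_congr_left
    intro x _
    simp only [Function.comp_def]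
    congr 1
    omega

lemma detour_aux {v y₁ y₂ : V} {C : G.Walk v v} (hC : IsLongestCycle G C)
    (m k : ℕ) (hk1 : 1 ≤ k) (hkn : k < C.length)
    {Q : G.Walk y₁ y₂} (hQ : Q.IsPath) (hQC : ∀ z ∈ Q.support, z ∉ C.support)
    (h₁ : G.Adj (C.getVert (m % C.length)) y₁)
    (h₂ : G.Adj y₂ (C.getVert ((m + k) % C.length)))
    (hlen : k ≤ Q.length + 1) : False := by
  classical
  set n := C.length with hn
  set g : ℕ → V := fun m => C.getVert (m % n) with hgdef
  have hcyc := hC.1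
  have hn3 : 3 ≤ n := hcyc.three_le_length
  have hn0 : 0 < n := by omega
  have hgmod : ∀ a b : ℕ, a % n = b % n → g a = g b := by
    intro a b h; simp only [hgdef]; rw [h]
  have hginj : ∀ a b : ℕ, g a = g b → a % n = b % n := by
    intro a b h
    exact cycle_getVert_inj hcyc (Nat.mod_lt _ hn0) (Nat.mod_lt _ hn0) h
  have hgadj : ∀ m, G.Adj (g m) (g (m + 1)) := by
    intro m
    have hmlt : m % n < n := Nat.mod_lt _ hn0
    rcases Nat.lt_or_ge (m % n + 1) n with hlt | hge
    · have h1 : (m + 1) % n = m % n + 1 := by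
        rw [Nat.add_mod, Nat.mod_eq_of_lt (show 1 < n by omega), Nat.mod_eq_of_lt hlt]
      have h3 := C.adj_getVert_succ (i := m % n) (by omega)
      simp only [hgdef]; rw [h1]; exact h3
    · have hm : m % n = n - 1 := by omega
      have h1 : (m + 1) % n = 0 := by
        rw [Nat.add_mod, Nat.mod_eq_of_lt (show 1 < n by omega), hm,
          Nat.sub_add_cancel (show 1 ≤ n by omega), Nat.mod_self]
      have hadj := C.adj_getVert_succ (i := n - 1) (by omega)
      have h2 : n - 1 + 1 = C.length := by omega
      rw [h2, Walk.getVert_length] at hadj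
      simp only [hgdef]
      rw [h1, hm, Walk.getVert_zero]
      exact hadj
  have hgmem : ∀ a, g a ∈ C.support := by
    intro a
    rw [Walk.mem_support_iff_exists_getVert]
    exact ⟨a % n, rfl, le_of_lt (Nat.mod_lt _ hn0)⟩
  -- the arc from g (m+k) back to g m
  have hper : g (m + k + (n - k)) = g (m + n) := by
    apply hgmod; congr 1; omega
  have hmn : g (m + n) = g m := hgmod _ _ (Nat.add_mod_right m n)
  let arc : G.Walk (g (m + k)) (g m) :=
    (arcW G g hgadj (n - k) (m + k)).copy rfl (hper.trans hmn)
  have harclen : arc.length = n - k := by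
    simp only [arc, Walk.length_copy, arcW_length]
  have harcsup : arc.support = (List.range (n - k + 1)).map (fun j => g (m + k + j)) := by
    simp only [arc, Walk.support_copy, arcW_support]
  have harcsubC : ∀ z ∈ arc.support, z ∈ C.support := by
    intro z hz
    rw [harcsup] at hz
    obtain ⟨j, _, rfl⟩ := List.mem_map.mp hz
    exact hgmem _
  have harcnd : arc.support.Nodup := by
    rw [harcsup]
    apply List.Nodup.map_on _ List.nodup_range
    intro a ha b hb hab
    have := hginj _ _ hab
    exact mod_cancel this (by rw [List.mem_range] at ha; omega)
      (by rw [List.mem_range] at hb; omega)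
  -- the detour cycle
  let T : G.Walk (g (m + k)) y₂ := arc.append (Walk.cons h₁ Q)
  have hTsup : T.support = arc.support ++ Q.support := by
    simp only [T, Walk.support_append, Walk.support_cons, List.tail_cons]
  have hTpath : T.IsPath := by
    rw [Walk.isPath_def, hTsup]
    refine List.Nodup.append harcnd hQ.support_nodup ?_
    intro z hz1 hz2
    exact hQC z hz2 (harcsubC z hz1)
  have hTlen : T.length = n - k + (Q.length + 1) := by
    simp only [T, Walk.length_append, Walk.length_cons, harclen]
  let D : G.Walk y₂ y₂ := Walk.cons h₂ T
  have hDcyc : D.IsCycle := by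
    rw [Walk.cons_isCycle_iff]
    refine ⟨hTpath, ?_⟩
    intro hmem
    simp only [T, Walk.edges_append, Walk.edges_cons, List.mem_append, List.mem_cons] at hmem
    rcases hmem with hmem | hmem | hmem
    · have : y₂ ∈ arc.support := Walk.fst_mem_support_of_mem_edges _ hmem
      exact hQC y₂ Q.end_mem_support (harcsubC _ this)
    · rw [Sym2.eq_iff] at hmem
      rcases hmem with ⟨h1, h2⟩ | ⟨h1, h2⟩
      · exact hQC y₂ Q.end_mem_support (h1 ▸ hgmem m)
      · have := hginj _ _ h2
        have : k = 0 := by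
          have h0 : (m + k) % n = (m + 0) % n := by simpa using this
          exact mod_cancel h0 hkn hn0
        omega
    · have : g ((m + k)) ∈ Q.support := Walk.snd_mem_support_of_mem_edges _ hmem
      exact hQC _ this (hgmem _)
  have hDlen : D.length = n - k + Q.length + 2 := by
    simp only [D, Walk.length_cons, hTlen]; omega
  have := hC.2 y₂ D hDcyc
  rw [hDlen, ← hn] at this
  omega
end Aux

/-- **Case 3 of Theorem 1.** Let `G` have toughness `τ > 1`, `C` a longest cycle with
`|C| ≤ 2δ + 3`, and `P = x₁→x₂` a longest path in `G ∖ C` of length `p̄` with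
`2 ≤ p̄ ≤ δ − 3`, `N_C(x₁) = N_C(x₂)` and exactly `s = δ − p̄` common neighbors on `C`.
Then `x₁x₂ ∈ E(G)` (so `G[V(P)]` is hamiltonian) and every `y ∈ V(P)` has
`N_C(y) = N_C(x₁)`. -/
theorem case3_structure {V : Type*} [Fintype V] [DecidableEq V]
    (G : SimpleGraph V) [DecidableRel G.Adj] {v x₁ x₂ : V}
    (C : G.Walk v v) (P : G.Walk x₁ x₂)
    (htough : ToughGtOne G)
    (hC : IsLongestCycle G C) (hshort : C.length ≤ 2 * G.minDegree + 3)
    (hP : IsLongestPathOff G C.support P)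
    (hp2 : 2 ≤ P.length) (hp3 : P.length + 3 ≤ G.minDegree)
    (hN : nbrsOn G C.support x₁ = nbrsOn G C.support x₂)
    (hs : (nbrsOn G C.support x₁).ncard + P.length = G.minDegree) :
    G.Adj x₁ x₂ ∧ ∀ y ∈ P.support, nbrsOn G C.support y = nbrsOn G C.support x₁ := by
  classical
  obtain ⟨hPp, hPoff, hPmax⟩ := hP
  have hcyc := hC.1
  set n := C.length with hn
  have hn3 : 3 ≤ n := hcyc.three_le_length
  have hn0 : 0 < n := by omega
  set g : ℕ → V := fun m => C.getVert (m % n) with hgdef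
  have hgmod : ∀ a b : ℕ, a % n = b % n → g a = g b := by
    intro a b h; simp only [hgdef]; rw [h]
  have hginj : ∀ a b : ℕ, g a = g b → a % n = b % n := by
    intro a b h
    exact cycle_getVert_inj hcyc (Nat.mod_lt _ hn0) (Nat.mod_lt _ hn0) h
  have hgmem : ∀ a, g a ∈ C.support := by
    intro a
    rw [Walk.mem_support_iff_exists_getVert]
    exact ⟨a % n, rfl, le_of_lt (Nat.mod_lt _ hn0)⟩
  have hgper : ∀ a, g (a + n) = g a := fun a => hgmod _ _ (Nat.add_mod_right a n)
  have hgetV : ∀ i, i ≤ n → g i = C.getVert i := by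
    intro i hi
    rcases eq_or_lt_of_le hi with rfl | h
    · simp only [hgdef]
      rw [Nat.mod_self, Walk.getVert_zero, hn, Walk.getVert_length]
    · simp only [hgdef]; rw [Nat.mod_eq_of_lt h]
  -- basic path facts
  have hPnodup := hPp.support_nodup
  have hx1C : x₁ ∉ C.support := hPoff _ P.start_mem_support
  have hx2C : x₂ ∉ C.support := hPoff _ P.end_mem_support
  have hx12 : x₁ ≠ x₂ := by
    intro h
    subst h
    rw [Walk.isPath_iff_eq_nil] at hPp
    subst hPp
    simp at hp2
  -- the finset of neighbors of x₁ on C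
  set Nfin : Finset V := Finset.univ.filter (fun u => u ∈ C.support ∧ G.Adj x₁ u) with hNfdef
  have hNmem : ∀ w, w ∈ Nfin ↔ (w ∈ C.support ∧ G.Adj x₁ w) := by
    intro w; simp [hNfdef]
  have hNset : nbrsOn G C.support x₁ = ↑Nfin := by
    ext w; simp [nbrsOn, hNfdef]
  have hNcard : Nfin.card + P.length = G.minDegree := by
    rw [← Set.ncard_coe_finset, ← hNset]; exact hs
  set pb := P.length with hpb
  -- Part 1 : x₁ is adjacent to every other vertex of P
  have hPcard : P.support.toFinset.card = pb + 1 := by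
    rw [List.toFinset_card_of_nodup hPnodup, Walk.length_support]
  have hsub : G.neighborFinset x₁ ⊆ Nfin ∪ (P.support.toFinset.erase x₁) := by
    intro w hw
    rw [mem_neighborFinset] at hw
    by_cases hwC : w ∈ C.support
    · exact Finset.mem_union_left _ ((hNmem w).mpr ⟨hwC, hw⟩)
    · have hwP : w ∈ P.support := by
        by_contra hwP
        have hpath : (Walk.cons hw.symm P).IsPath := hPp.cons hwP
        have hoff : ∀ u ∈ (Walk.cons hw.symm P).support, u ∉ C.support := by
          intro u hu
          rw [Walk.support_cons, List.mem_cons] at hu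
          rcases hu with rfl | hu
          · exact hwC
          · exact hPoff u hu
        have := hPmax _ _ _ hpath hoff
        rw [Walk.length_cons] at this; omega
      exact Finset.mem_union_right _
        (Finset.mem_erase.mpr ⟨hw.ne', List.mem_toFinset.mpr hwP⟩)
  have hdeg : G.minDegree ≤ (G.neighborFinset x₁).card := by
    rw [card_neighborFinset_eq_degree]; exact G.minDegree_le_degree x₁
  have hBcard : (P.support.toFinset.erase x₁).card = pb := by
    rw [Finset.card_erase_of_mem (List.mem_toFinset.mpr P.start_mem_support), hPcard]
    omega
  have hUnion : (Nfin ∪ P.support.toFinset.erase x₁).card ≤ G.minDegree := by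
    calc (Nfin ∪ P.support.toFinset.erase x₁).card
        ≤ Nfin.card + pb := by rw [← hBcard]; exact Finset.card_union_le _ _
      _ ≤ G.minDegree := by omega
  have hEq : G.neighborFinset x₁ = Nfin ∪ P.support.toFinset.erase x₁ :=
    Finset.eq_of_subset_of_card_le hsub (le_trans hUnion hdeg)
  have hadj_all : ∀ w ∈ P.support, w ≠ x₁ → G.Adj x₁ w := by
    intro w hw hwne
    have hmem : w ∈ G.neighborFinset x₁ := by
      rw [hEq]
      exact Finset.mem_union_right _
        (Finset.mem_erase.mpr ⟨hwne, List.mem_toFinset.mpr hw⟩)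
    rwa [mem_neighborFinset] at hmem
  have hadj12 : G.Adj x₁ x₂ := hadj_all x₂ P.end_mem_support (Ne.symm hx12)
  have hadjx2 : ∀ w, w ∈ C.support → G.Adj x₁ w → G.Adj x₂ w := by
    intro w h1 h2
    have hmem : w ∈ nbrsOn G C.support x₂ := hN ▸ (⟨h1, h2⟩ : w ∈ nbrsOn G C.support x₁)
    exact hmem.2
  -- the cycle has length at least pb + 2
  have hnlb : pb + 2 ≤ n := by
    obtain ⟨a, ha⟩ : ∃ a, a ∈ Nfin := Finset.card_pos.mp (by omega)
    rw [hNmem] at ha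
    have hax2 : G.Adj x₂ a := hadjx2 a ha.1 ha.2
    have haP : a ∉ P.support := fun h => hPoff a h ha.1
    let T : G.Walk x₁ a := P.append (Walk.cons hax2 Walk.nil)
    have hTsup : T.support = P.support ++ [a] := by
      simp [T, Walk.support_append]
    have hTpath : T.IsPath := by
      rw [Walk.isPath_def, hTsup]
      refine List.Nodup.append hPnodup (List.nodup_singleton a) ?_
      intro z hz1 hz2
      rw [List.mem_singleton] at hz2
      subst hz2
      exact haP hz1
    have hD : (Walk.cons ha.2.symm T).IsCycle := by
      rw [Walk.cons_isCycle_iff]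
      refine ⟨hTpath, ?_⟩
      intro hmem
      simp only [T, Walk.edges_append, Walk.edges_cons, Walk.edges_nil, List.mem_append,
        List.mem_cons, List.not_mem_nil, or_false] at hmem
      rcases hmem with hmem | hmem
      · exact haP (Walk.fst_mem_support_of_mem_edges _ hmem)
      · rw [Sym2.eq_iff] at hmem
        rcases hmem with ⟨h1, h2⟩ | ⟨h1, h2⟩
        · exact hx12 (h2.trans h1)
        · exact hx12 h2
    have := hC.2 a _ hD
    simp only [Walk.length_cons, T, Walk.length_append, Walk.length_nil] at this
    omega
  refine ⟨hadj12, ?_⟩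
  intro y hy
  by_cases hyx1 : y = x₁
  · subst hyx1; rfl
  by_cases hyx2 : y = x₂
  · subst hyx2; exact hN.symm
  -- split P at y
  have hT1 : (P.takeUntil y hy).IsPath := hPp.takeUntil hy
  set T1 := P.takeUntil y hy with hT1def
  set T2 := P.dropUntil y hy with hT2def
  have hspec : T1.append T2 = P := P.take_spec hy
  have hlen12 : T1.length + T2.length = pb := by
    rw [← Walk.length_append, hspec]
  have hT1pos : 1 ≤ T1.length := by
    by_contra h
    exact hyx1 ((Walk.eq_of_length_eq_zero (p := T1) (by omega)).symm)
  have hT2pos : 1 ≤ T2.length := by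
    by_contra h
    exact hyx2 (Walk.eq_of_length_eq_zero (p := T2) (by omega))
  have hPsupp : P.support = T1.support ++ T2.support.tail := by
    rw [← hspec, Walk.support_append]
  have hT2nn : ¬ T2.Nil := by rw [Walk.nil_iff_length_eq]; omega
  obtain ⟨z, hyz, T3, hT2eq⟩ := Walk.not_nil_iff.mp hT2nn
  have hT3path : T3.IsPath := by
    have h2 := hPp.dropUntil hy
    rw [← hT2def, hT2eq] at h2
    exact h2.of_cons
  have hT2tail : T2.support.tail = T3.support := by
    rw [hT2eq, Walk.support_cons, List.tail_cons]
  have hPdisj : List.Disjoint T1.support T3.support := by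
    have h2 := hPnodup
    rw [hPsupp, hT2tail] at h2
    exact List.disjoint_of_nodup_append h2
  have hzP : z ∈ P.support := by
    rw [hPsupp, hT2tail]
    exact List.mem_append_right _ T3.start_mem_support
  have hzx1 : z ≠ x₁ := by
    intro h
    exact hPdisj (h ▸ T1.start_mem_support) T3.start_mem_support
  have hadjz : G.Adj x₁ z := hadj_all z hzP hzx1
  -- the rerouted path from y to x₂
  set Qy : G.Walk y x₂ := T1.reverse.append (Walk.cons hadjz T3) with hQydef
  have hQsup : Qy.support = T1.support.reverse ++ T3.support := by
    simp [hQydef, Walk.support_append, Walk.support_reverse]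
  have hQsubP : ∀ w ∈ Qy.support, w ∈ P.support := by
    intro w hw
    rw [hQsup, List.mem_append, List.mem_reverse] at hw
    rcases hw with hw | hw
    · exact (P.support_takeUntil_subset hy) hw
    · rw [hPsupp, hT2tail]; exact List.mem_append_right _ hw
  have hQpath : Qy.IsPath := by
    rw [Walk.isPath_def, hQsup]
    refine List.Nodup.append (by rw [List.nodup_reverse]; exact hT1.support_nodup)
      hT3path.support_nodup ?_
    intro w h1 h2
    exact hPdisj (List.mem_reverse.mp h1) h2
  have hQlen : Qy.length = pb := by
    have h3 : T2.length = T3.length + 1 := by rw [hT2eq, Walk.length_cons]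
    simp only [hQydef, Walk.length_append, Walk.length_reverse, Walk.length_cons]
    omega
  have hQoff : ∀ w ∈ Qy.support, w ∉ C.support := fun w hw => hPoff w (hQsubP w hw)
  have hT1off : ∀ w ∈ T1.support, w ∉ C.support :=
    fun w hw => hPoff w (P.support_takeUntil_subset hy hw)
  -- no "foreign" neighbour of y on C
  have hforeign : ∀ u, u ∈ C.support → G.Adj y u → G.Adj x₁ u := by
    intro u huC huy
    by_contra hux1
    obtain ⟨μ, hμgv, hμle⟩ := Walk.mem_support_iff_exists_getVert.mp huC
    have hgu : g μ = u := by rw [hgetV μ (hn ▸ hμle)]; exact hμgv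
    -- claim A : no two neighbours of x₁ within distance pb+1 on C
    have hA : ∀ α k, G.Adj x₁ (g α) → 1 ≤ k → k ≤ pb + 1 → ¬ G.Adj x₁ (g (α + k)) := by
      intro α k h1 hk1 hk2 h2
      exact detour_aux hC α k hk1 (by omega) hPp hPoff h1.symm
        (hadjx2 _ (hgmem _) h2) (by omega)
    -- claim B : no neighbour of x₁ within distance pb+1 after u
    have hB : ∀ k, 1 ≤ k → k ≤ pb + 1 → ¬ G.Adj x₁ (g (μ + k)) := by
      intro k hk1 hk2 h2
      exact detour_aux hC μ k hk1 (by omega) hQpath hQoff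
        (show G.Adj (g μ) y by rw [hgu]; exact huy.symm)
        (hadjx2 _ (hgmem _) h2) (by rw [hQlen]; omega)
    -- claim C : no neighbour of x₁ one or two steps before u
    have hCm : ∀ k, 1 ≤ k → k ≤ 2 → ¬ G.Adj x₁ (g (μ + n - k)) := by
      intro k hk1 hk2 h2
      have he : g (μ + n - k + k) = u := by
        rw [show μ + n - k + k = μ + n by omega, hgper, hgu]
      exact detour_aux hC (μ + n - k) k hk1 (by omega) hT1 hT1off h2.symm
        (show G.Adj y (g (μ + n - k + k)) by rw [he]; exact huy) (by omega)
    have hux1' : ¬ G.Adj x₁ u := fun h => hux1 h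
    -- the first neighbour of x₁ after u on C
    have hex : ∃ d, 1 ≤ d ∧ G.Adj x₁ (g (μ + d)) := by
      obtain ⟨a, ha⟩ : ∃ a, a ∈ Nfin := Finset.card_pos.mp (by omega)
      rw [hNmem] at ha
      obtain ⟨α, hαgv, hαle⟩ := Walk.mem_support_iff_exists_getVert.mp ha.1
      have hga : g α = a := by rw [hgetV α (hn ▸ hαle)]; exact hαgv
      have hrle : μ % n ≤ μ := Nat.mod_le _ _
      have hrlt : μ % n < n := Nat.mod_lt _ hn0
      refine ⟨α + n - μ % n, by omega, ?_⟩
      have hmodeq : g (μ + (α + n - μ % n)) = g α := by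
        apply hgmod
        have h2 := Nat.div_add_mod μ n
        have h3 : (μ / n + 1) * n = n * (μ / n) + n := by ring
        have h1 : μ + (α + n - μ % n) = α + (μ / n + 1) * n := by omega
        rw [h1, Nat.add_mul_mod_self_right]
      rw [hmodeq, hga]; exact ha.2
    set d := Nat.find hex with hddef
    have hdspec := Nat.find_spec hex
    have hd1 : 1 ≤ d := hdspec.1
    have hdadj : G.Adj x₁ (g (μ + d)) := hdspec.2
    have hdmin : ∀ d', d' < d → ¬ (1 ≤ d' ∧ G.Adj x₁ (g (μ + d'))) :=
      fun d' h => Nat.find_min hex h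
    have hdlb : pb + 2 ≤ d := by
      by_contra h
      exact hB d hd1 (by omega) hdadj
    -- indices of vertices on C
    have hindex : ∀ w : V, ∃ i, w ∈ C.support → (i < n ∧ g i = w) := by
      intro w
      by_cases hw : w ∈ C.support
      · obtain ⟨i, hi1, hi2⟩ := Walk.mem_support_iff_exists_getVert.mp hw
        refine ⟨i % n, fun _ => ⟨Nat.mod_lt _ hn0, ?_⟩⟩
        rw [hgmod (i % n) i (Nat.mod_mod_of_dvd i dvd_rfl), hgetV i (hn ▸ hi2)]
        exact hi1
      · exact ⟨0, fun h => absurd h hw⟩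
    choose ind hindspec using hindex
    -- the key injectivity property
    have hkey : ∀ a ∈ Nfin, ∀ b ∈ Nfin, ∀ k j : ℕ, k ≤ pb + 1 → j ≤ pb + 1 → k ≤ j →
        (ind a + k) % n = (ind b + j) % n → a = b ∧ k = j := by
      intro a ha b hb k j hk hj hkj heq
      rw [hNmem] at ha hb
      obtain ⟨haind, hagv⟩ := hindspec a ha.1
      obtain ⟨hbind, hbgv⟩ := hindspec b hb.1
      have heq2 : (ind a + k) % n = ((ind b + (j - k)) + k) % n := by
        rw [show ind b + (j - k) + k = ind b + j by omega]; exact heq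
      have heq3 : ind a % n = (ind b + (j - k)) % n := Nat.ModEq.add_right_cancel' k heq2
      by_cases hjk : j = k
      · subst hjk
        have h4 : ind a % n = ind b % n := by
          rw [show j - j = 0 by omega, Nat.add_zero] at heq3; exact heq3
        rw [Nat.mod_eq_of_lt haind, Nat.mod_eq_of_lt hbind] at h4
        exact ⟨by rw [← hagv, ← hbgv, h4], rfl⟩
      · exfalso
        have hgab : g (ind a) = g (ind b + (j - k)) := hgmod _ _ heq3
        apply hA (ind b) (j - k) (by rw [hbgv]; exact hb.2) (by omega) (by omega)
        rw [← hgab, hagv]; exact ha.2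
    set φ : V × ℕ → ℕ := fun q => (ind q.1 + q.2) % n with hφdef
    have hinjφ : Set.InjOn φ ↑(Nfin ×ˢ Finset.range (pb + 2)) := by
      rintro ⟨a, k⟩ hmem ⟨b, j⟩ hmem' heq
      simp only [Finset.coe_product, Set.mem_prod, Finset.mem_coe, Finset.coe_range,
        Set.mem_Iio] at hmem hmem'
      simp only [hφdef] at heq
      rcases le_total k j with h | h
      · obtain ⟨h1, h2⟩ := hkey a hmem.1 b hmem'.1 k j (by omega) (by omega) h heq
        simp [h1, h2]
      · obtain ⟨h1, h2⟩ := hkey b hmem'.1 a hmem.1 j k (by omega) (by omega) h heq.symm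
        simp [h1, h2]
    set S₁ := (Nfin ×ˢ Finset.range (pb + 2)).image φ with hS₁def
    have hS₁card : S₁.card = Nfin.card * (pb + 2) := by
      rw [hS₁def, Finset.card_image_of_injOn hinjφ, Finset.card_product, Finset.card_range]
    set base := μ + d - 3 with hbase
    set S₂ : Finset ℕ := {(base + 2) % n, (base + 1) % n, base % n} with hS₂def
    have hS₂card : S₂.card = 3 := by
      have hne : ∀ i j : ℕ, i < n → j < n → (base + i) % n = (base + j) % n → i = j :=
        fun i j hi hj h => mod_cancel h hi hj
      have h21 : (base + 2) % n ≠ (base + 1) % n := fun h => by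
        have := hne 2 1 (by omega) (by omega) h; omega
      have h20 : (base + 2) % n ≠ base % n := fun h => by
        have := hne 2 0 (by omega) (by omega) (by rw [Nat.add_zero]; exact h); omega
      have h10 : (base + 1) % n ≠ base % n := fun h => by
        have := hne 1 0 (by omega) (by omega) (by rw [Nat.add_zero]; exact h); omega
      rw [hS₂def]
      rw [Finset.card_insert_of_notMem (by simp [h21, h20]),
        Finset.card_insert_of_notMem (by simp [h10]), Finset.card_singleton]
    have hdisj : Disjoint S₁ S₂ := by
      rw [Finset.disjoint_left]
      rintro r hr1 hr2
      simp only [hS₁def, Finset.mem_image, Finset.mem_product, Finset.mem_range] at hr1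
      obtain ⟨⟨a, k⟩, ⟨haN, hk⟩, rfl⟩ := hr1
      have haN' := (hNmem a).mp haN
      obtain ⟨haind, hagv⟩ := hindspec a haN'.1
      have hφr : φ (a, k) = (ind a + k) % n := rfl
      have ht : ∃ t, 1 ≤ t ∧ t ≤ 3 ∧ (ind a + k) % n = (μ + d - t) % n := by
        simp only [hS₂def, Finset.mem_insert, Finset.mem_singleton, hφr] at hr2
        rcases hr2 with h | h | h
        · exact ⟨1, by omega, by omega, by
            rw [h]; exact congrArg (fun z => z % n) (by omega : base + 2 = μ + d - 1)⟩
        · exact ⟨2, by omega, by omega, by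
            rw [h]; exact congrArg (fun z => z % n) (by omega : base + 1 = μ + d - 2)⟩
        · exact ⟨3, by omega, by omega, by rw [h]⟩
      obtain ⟨t, ht1, ht3, heq⟩ := ht
      have heq2 : (ind a + (k + t)) % n = (μ + d) % n := by
        have h5 : (ind a + k + t) % n = (μ + d - t + t) % n := by
          rw [Nat.add_mod, heq, ← Nat.add_mod]
        rw [show μ + d - t + t = μ + d by omega] at h5
        rw [show ind a + (k + t) = ind a + k + t by omega]
        exact h5
      set mm := k + t with hmmdef
      rcases Nat.lt_or_ge mm (pb + 2) with hmlt | hmge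
      · exact hA (ind a) mm (by rw [hagv]; exact haN'.2) (by omega) (by omega)
          (by rw [hgmod _ _ heq2]; exact hdadj)
      · rcases Nat.lt_trichotomy d mm with hdm | hdm | hdm
        · -- d < mm ≤ pb + 4, so mm - d ∈ {1, 2} : contradicts claim C
          have e1 : (ind a + (mm - d) + d) % n = (μ + d) % n := by
            rw [show ind a + (mm - d) + d = ind a + mm by omega]; exact heq2
          have e2 : (ind a + (mm - d)) % n = μ % n := Nat.ModEq.add_right_cancel' d e1
          have e3 : (ind a + (mm - d)) % n = (μ + n - (mm - d) + (mm - d)) % n := by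
            rw [show μ + n - (mm - d) + (mm - d) = μ + n by omega, Nat.add_mod_right]
            exact e2
          have e4 : ind a % n = (μ + n - (mm - d)) % n :=
            Nat.ModEq.add_right_cancel' (mm - d) e3
          apply hCm (mm - d) (by omega) (by omega)
          rw [← hgmod _ _ e4, hagv]
          exact haN'.2
        · -- d = mm : then a = u, contradicting that u is not a neighbour of x₁
          have e1 : (ind a + mm) % n = (μ + mm) % n := by rw [hdm] at heq2; exact heq2
          have e2 : ind a % n = μ % n := Nat.ModEq.add_right_cancel' mm e1
          have hau : a = u := by rw [← hagv, ← hgu]; exact hgmod _ _ e2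
          exact hux1' (hau ▸ haN'.2)
        · -- mm < d : contradicts minimality of d
          have e1 : (ind a + mm) % n = (μ + (d - mm) + mm) % n := by
            rw [show μ + (d - mm) + mm = μ + d by omega]; exact heq2
          have e2 : ind a % n = (μ + (d - mm)) % n := Nat.ModEq.add_right_cancel' mm e1
          exact hdmin (d - mm) (by omega)
            ⟨by omega, by rw [← hgmod _ _ e2, hagv]; exact haN'.2⟩
    have hsubr : S₁ ∪ S₂ ⊆ Finset.range n := by
      intro r hr
      rw [Finset.mem_union] at hr
      rw [Finset.mem_range]
      rcases hr with hr | hr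
      · simp only [hS₁def, Finset.mem_image] at hr
        obtain ⟨q, _, rfl⟩ := hr
        exact Nat.mod_lt _ hn0
      · simp only [hS₂def, Finset.mem_insert, Finset.mem_singleton] at hr
        rcases hr with rfl | rfl | rfl <;> exact Nat.mod_lt _ hn0
    have hcount : Nfin.card * (pb + 2) + 3 ≤ n := by
      have h6 := Finset.card_le_card hsubr
      rwa [Finset.card_union_of_disjoint hdisj, hS₁card, hS₂card, Finset.card_range] at h6
    have hnle : n ≤ 2 * G.minDegree + 3 := hshort
    have hmul : Nfin.card * (pb + 2) = Nfin.card * pb + Nfin.card * 2 := by ring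
    have hq3 : 3 ≤ Nfin.card := by omega
    have hlow : 3 * pb ≤ Nfin.card * pb := Nat.mul_le_mul_right _ hq3
    omega
  -- conclude : N_C(y) = N_C(x₁)
  have hNysub : nbrsOn G C.support y ⊆ nbrsOn G C.support x₁ := by
    intro w hw
    exact ⟨hw.1, hforeign w hw.1 hw.2⟩
  set NyF : Finset V := Finset.univ.filter (fun u => u ∈ C.support ∧ G.Adj y u) with hNyFdef
  have hNymem : ∀ w, w ∈ NyF ↔ (w ∈ C.support ∧ G.Adj y w) := by
    intro w; simp [hNyFdef]
  have hNyset : nbrsOn G C.support y = ↑NyF := by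
    ext w; simp [nbrsOn, hNyFdef]
  have hQcard : Qy.support.toFinset.card = pb + 1 := by
    rw [List.toFinset_card_of_nodup hQpath.support_nodup, Walk.length_support, hQlen]
  have hysub : G.neighborFinset y ⊆ NyF ∪ (Qy.support.toFinset.erase y) := by
    intro w hw
    rw [mem_neighborFinset] at hw
    by_cases hwC : w ∈ C.support
    · exact Finset.mem_union_left _ ((hNymem w).mpr ⟨hwC, hw⟩)
    · have hwQ : w ∈ Qy.support := by
        by_contra hwQ
        have hpath : (Walk.cons hw.symm Qy).IsPath := hQpath.cons hwQ
        have hoff : ∀ z ∈ (Walk.cons hw.symm Qy).support, z ∉ C.support := by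
          intro z hz
          rw [Walk.support_cons, List.mem_cons] at hz
          rcases hz with rfl | hz
          · exact hwC
          · exact hQoff z hz
        have := hPmax _ _ _ hpath hoff
        rw [Walk.length_cons, hQlen] at this; omega
      exact Finset.mem_union_right _
        (Finset.mem_erase.mpr ⟨hw.ne', List.mem_toFinset.mpr hwQ⟩)
  have hyBcard : (Qy.support.toFinset.erase y).card = pb := by
    rw [Finset.card_erase_of_mem (List.mem_toFinset.mpr Qy.start_mem_support), hQcard]
    omega
  have hydeg : G.minDegree ≤ (G.neighborFinset y).card := by
    rw [card_neighborFinset_eq_degree]; exact G.minDegree_le_degree y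
  have hNylb : G.minDegree ≤ NyF.card + pb := by
    calc G.minDegree ≤ (G.neighborFinset y).card := hydeg
      _ ≤ (NyF ∪ Qy.support.toFinset.erase y).card := Finset.card_le_card hysub
      _ ≤ NyF.card + pb := by rw [← hyBcard]; exact Finset.card_union_le _ _
  apply Set.eq_of_subset_of_ncard_le hNysub _ (Set.toFinite _)
  rw [hNset, hNyset, Set.ncard_coe_finset, Set.ncard_coe_finset]
  omega


end ToughPaper
end
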